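/- Let β : ℤ → ℂ and ω : ℤ → ℂ be arbitrary functions such that β_{n+1} ≠ β_{n-1} and β_n + ω_m ≠ 0 for all n,m ∈ ℤ. Then the function u_{n,m} = (β_{n+1} - 2β_n + β_{n-1})/(β_{n+1} - β_{n-1}) - 2 (β_{n+1} - β_n)(β_n - β_{n-1}) / ((β_{n+1} - β_{n-1})(β_n + ω_m)) satisfies (u_{n+1,m+1}+1)(u_{n,m+1}-1) = (u_{n+1,m}+1)(u_{n,m}-1) for all n,m ∈ ℤ. Thus this formula gives the explicit general solution of the equation with θ = 1. -/
import Mathlib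

lemma uplus (β ω : ℤ → ℂ)
    (h1 : β (n + 1) - β (n - 1) ≠ 0) (h2 : β n + ω m ≠ 0)
    (x : ℂ)
    (hx : x = (β (n + 1) - 2 * β n + β (n - 1)) / (β (n + 1) - β (n - 1))
        - 2 * ((β (n + 1) - β n) * (β n - β (n - 1)))
            / ((β (n + 1) - β (n - 1)) * (β n + ω m))) :
    x + 1 = 2 * (β (n + 1) - β n) * (β (n - 1) + ω m)
        / ((β (n + 1) - β (n - 1)) * (β n + ω m)) := by
  rw [hx]
  field_simp
  ring

lemma uminus (β ω : ℤ → ℂ)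
    (h1 : β (n + 1) - β (n - 1) ≠ 0) (h2 : β n + ω m ≠ 0)
    (x : ℂ)
    (hx : x = (β (n + 1) - 2 * β n + β (n - 1)) / (β (n + 1) - β (n - 1))
        - 2 * ((β (n + 1) - β n) * (β n - β (n - 1)))
            / ((β (n + 1) - β (n - 1)) * (β n + ω m))) :
    x - 1 = -2 * (β n - β (n - 1)) * (β (n + 1) + ω m)
        / ((β (n + 1) - β (n - 1)) * (β n + ω m)) := by
  rw [hx]
  field_simp
  ring

/-- Explicit general solution of the lattice equation with `θ = 1`:
`u_{n,m} = (β_{n+1}-2β_n+β_{n-1})/(β_{n+1}-β_{n-1}) - 2(β_{n+1}-β_n)(β_n-β_{n-1})/((β_{n+1}-β_{n-1})(β_n+ω_m))`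
satisfies `(u_{n+1,m+1}+1)(u_{n,m+1}-1) = (u_{n+1,m}+1)(u_{n,m}-1)`. -/
theorem stmt_5 (β ω : ℤ → ℂ)
    (hβ : ∀ n : ℤ, β (n + 1) ≠ β (n - 1))
    (hβω : ∀ n m : ℤ, β n + ω m ≠ 0)
    (u : ℤ → ℤ → ℂ)
    (hu : ∀ n m : ℤ, u n m =
      (β (n + 1) - 2 * β n + β (n - 1)) / (β (n + 1) - β (n - 1))
        - 2 * ((β (n + 1) - β n) * (β n - β (n - 1)))
            / ((β (n + 1) - β (n - 1)) * (β n + ω m))) :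
    ∀ n m : ℤ,
      (u (n + 1) (m + 1) + 1) * (u n (m + 1) - 1)
        = (u (n + 1) m + 1) * (u n m - 1) := by
  have key : ∀ n m : ℤ, (u (n + 1) m + 1) * (u n m - 1)
      = -4 * (β (n + 1 + 1) - β (n + 1)) * (β n - β (n - 1))
        / ((β (n + 1 + 1) - β (n + 1 - 1)) * (β (n + 1) - β (n - 1))) := by
    intro n m
    have e : n + 1 - 1 = n := by ring
    have h1 : β (n + 1 + 1) - β (n + 1 - 1) ≠ 0 := sub_ne_zero.mpr (hβ (n + 1))
    have h2 : β (n + 1) - β (n - 1) ≠ 0 := sub_ne_zero.mpr (hβ n)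
    have h3 : β (n + 1) + ω m ≠ 0 := hβω (n + 1) m
    have h4 : β n + ω m ≠ 0 := hβω n m
    rw [uplus β ω h1 h3 _ (hu (n + 1) m), uminus β ω h2 h4 _ (hu n m), e]
    rw [e] at h1
    rw [div_mul_div_comm]
    rw [div_eq_div_iff (mul_ne_zero (mul_ne_zero h1 h3) (mul_ne_zero h2 h4))
      (mul_ne_zero h1 h2)]
    ring
  intro n m
  rw [key n (m + 1), key n m]
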